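/- Let G be a finite group and let H ≤ G be a subgroup of minimal cardinality among all subgroups K of G for which the abelianization K/K' has maximal order among all abelian sections of G (i.e., |H/H'| ≥ |A/B| for every pair of subgroups B ⊴ A ≤ G with A/B abelian, and H has minimal order among subgroups with this property). Then H is nilpotent of class at most 2. -/

import Mathlib

open Subgroup Pointwise
open scoped commutatorElement

universe u

namespace NilpTwo

section Aux

variable {X : Type*} [Group X]

lemma normal_of_commutator_le {M : Subgroup X} (h : commutator X ≤ M) : M.Normal := by
  constructor
  intro m hm g
  have h1 : ⁅g, m⁆ ∈ M := h (by
    rw [_root_.commutator_def]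
    exact Subgroup.commutator_mem_commutator (mem_top g) (mem_top m))
  have e : g * m * g⁻¹ = ⁅g, m⁆ * m := by group
  rw [e]
  exact M.mul_mem h1 hm

lemma ab_of_surjective : Function.Surjective (Abelianization.of : X → Abelianization X) :=
  fun y => Quotient.inductionOn' y (fun x => ⟨x, rfl⟩)

lemma card_le_card_abelianization {Y C : Type*} [Group Y] [CommGroup C] [Finite Y]
    (f : Y →* C) (hf : Function.Surjective f) :
    Nat.card C ≤ Nat.card (Abelianization Y) := by
  have h : Function.Surjective (Abelianization.lift f) := by
    intro c
    obtain ⟨y, hy⟩ := hf c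
    exact ⟨Abelianization.of y, by simp [hy]⟩
  exact Nat.card_le_card_of_surjective _ h

lemma card_abelianization_le_of_surjective {Y Z : Type*} [Group Y] [Group Z] [Finite Y]
    (f : Y →* Z) (hf : Function.Surjective f) :
    Nat.card (Abelianization Z) ≤ Nat.card (Abelianization Y) :=
  card_le_card_abelianization (Abelianization.of.comp f)
    (ab_of_surjective.comp hf)

lemma card_abelianization_congr {Y Z : Type*} [Group Y] [Group Z] (e : Y ≃* Z) :
    Nat.card (Abelianization Y) = Nat.card (Abelianization Z) :=
  Nat.card_congr e.abelianizationCongr.toEquiv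

lemma exists_surjHom_comap {X : Type u} [Group X] (N : Subgroup X) [N.Normal]
    (K₁ : Subgroup (X ⧸ N)) :
    ∃ f : ↥(K₁.comap (QuotientGroup.mk' N)) →* ↥K₁, Function.Surjective f := by
  refine ⟨((QuotientGroup.mk' N).comp
      (K₁.comap (QuotientGroup.mk' N)).subtype).codRestrict K₁ (fun x => x.2), ?_⟩
  rintro ⟨k, hk⟩
  obtain ⟨x, rfl⟩ := QuotientGroup.mk'_surjective N k
  exact ⟨⟨x, hk⟩, rfl⟩

lemma card_abelianization_quotient {X : Type u} [Group X] [Finite X] (N : Subgroup X) [N.Normal]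
    (h : N ≤ commutator X) :
    Nat.card (Abelianization (X ⧸ N)) = Nat.card (Abelianization X) := by
  have h1 : commutator (X ⧸ N) = (commutator X).map (QuotientGroup.mk' N) := by
    rw [_root_.commutator_def, commutator_def, Subgroup.map_commutator,
      Subgroup.map_top_of_surjective _ (QuotientGroup.mk'_surjective N)]
  calc Nat.card (Abelianization (X ⧸ N))
      = Nat.card ((X ⧸ N) ⧸ commutator (X ⧸ N)) := rfl
    _ = Nat.card ((X ⧸ N) ⧸ (commutator X).map (QuotientGroup.mk' N)) := by rw [h1]
    _ = Nat.card (X ⧸ commutator X) :=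
        Nat.card_congr (QuotientGroup.quotientQuotientEquivQuotient N (commutator X) h).toEquiv
    _ = Nat.card (Abelianization X) := rfl

lemma card_ker_mul_card_range {Y Z : Type*} [Group Y] [Group Z] [Finite Y] (f : Y →* Z) :
    Nat.card f.ker * Nat.card f.range = Nat.card Y := by
  rw [Subgroup.card_eq_card_quotient_mul_card_subgroup f.ker,
    Nat.card_congr (QuotientGroup.quotientKerEquivRange f).toEquiv, Nat.mul_comm]

lemma lcs_succ_comm (n : ℕ) :
    (⊤ : Subgroup X).lowerCentralSeries (n + 1) = ⁅(⊤ : Subgroup X).lowerCentralSeries n, (⊤ : Subgroup X)⁆ := rfl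

lemma lcs_stable {k : ℕ}
    (h : (⊤ : Subgroup X).lowerCentralSeries (k + 1) = (⊤ : Subgroup X).lowerCentralSeries k) :
    ∀ j, k ≤ j → (⊤ : Subgroup X).lowerCentralSeries j = (⊤ : Subgroup X).lowerCentralSeries k := by
  intro j hj
  induction j, hj using Nat.le_induction with
  | base => rfl
  | succ m hm ih =>
    rw [Subgroup.lowerCentralSeries_succ, ih, ← Subgroup.lowerCentralSeries_succ, h]

lemma lcs_bot_of_nilpotent_of_stab {k : ℕ} (hnil : Group.IsNilpotent X)
    (h : (⊤ : Subgroup X).lowerCentralSeries (k + 1) = (⊤ : Subgroup X).lowerCentralSeries k) :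
    (⊤ : Subgroup X).lowerCentralSeries k = ⊥ := by
  obtain ⟨n, hn⟩ := Subgroup.nilpotent_iff_lowerCentralSeries.mp hnil
  rcases le_total n k with hnk | hkn
  · exact le_bot_iff.mp (hn ▸ Subgroup.lowerCentralSeries_antitone (S := ⊤) hnk)
  · rw [← lcs_stable h n hkn, hn]


lemma hall_witt_center {d₁ d₂ : X}
    (h₁ : ∀ u ∈ commutator X, Commute d₁ u) (h₂ : ∀ u ∈ commutator X, Commute d₂ u) :
    ⁅d₁, d₂⁆ ∈ Subgroup.center X := by
  have memX' : ∀ a b : X, ⁅a, b⁆ ∈ commutator X := by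
    intro a b
    rw [_root_.commutator_def]
    exact Subgroup.commutator_mem_commutator (mem_top a) (mem_top b)
  have conjmem : ∀ u ∈ commutator X, ∀ c : X, c⁻¹ * u * c ∈ commutator X := by
    intro u hu c
    have := (Subgroup.commutator_normal (⊤ : Subgroup X) ⊤).conj_mem u
      (by rw [_root_.commutator_def] at hu; exact hu) c⁻¹
    rw [_root_.commutator_def]
    simpa using this
  have vanish : ∀ (e f c : X), (∀ u ∈ commutator X, Commute e u) →
      ⁅⁅f, c⁆, c * e * c⁻¹⁆ = 1 := by
    intro e f c he
    rw [commutatorElement_eq_one_iff_commute]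
    have h0 : Commute (c⁻¹ * ⁅f, c⁆ * c) e := ((he _ (conjmem _ (memX' f c) c)).symm)
    have h1 := h0.map (MulAut.conj c).toMonoidHom
    have e1 : (MulAut.conj c).toMonoidHom (c⁻¹ * ⁅f, c⁆ * c) = ⁅f, c⁆ := by
      simp [MulAut.conj_apply]; group
    have e2 : (MulAut.conj c).toMonoidHom e = c * e * c⁻¹ := by
      simp [MulAut.conj_apply]
    rwa [e1, e2] at h1
  rw [Subgroup.mem_center_iff]
  intro g
  have hz : ⁅⁅d₁, d₂⁆, g⁆ = 1 := by
    set c := d₂⁻¹ * g * d₂ with hc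
    have hid : ⁅⁅d₁, d₂⁆, d₂ * c * d₂⁻¹⁆ * ⁅⁅d₂, c⁆, c * d₁ * c⁻¹⁆ *
        ⁅⁅c, d₁⁆, d₁ * d₂ * d₁⁻¹⁆ = 1 := by
      rw [hc]; group
    have t2 : ⁅⁅d₂, c⁆, c * d₁ * c⁻¹⁆ = 1 := vanish d₁ d₂ c h₁
    have t3 : ⁅⁅c, d₁⁆, d₁ * d₂ * d₁⁻¹⁆ = 1 := vanish d₂ c d₁ h₂
    have e0 : d₂ * c * d₂⁻¹ = g := by rw [hc]; group
    rw [t2, t3, e0, mul_one, mul_one] at hid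
    exact hid
  exact (commutatorElement_eq_one_iff_mul_comm.mp hz).symm

lemma normal_zpowers_of_central {x : X} (hx : x ∈ Subgroup.center X) :
    (Subgroup.zpowers x).Normal := by
  constructor
  intro m hm g
  obtain ⟨k, rfl⟩ := Subgroup.mem_zpowers_iff.mp hm
  have hk : (x ^ k : X) ∈ Subgroup.center X := Subgroup.zpow_mem _ hx k
  have := (Subgroup.mem_center_iff.mp hk g).symm
  have e : g * x ^ k * g⁻¹ = x ^ k := by
    rw [← this]; group
  rw [e]
  exact Subgroup.zpow_mem _ (Subgroup.mem_zpowers x) k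

end Aux

set_option maxHeartbeats 1000000 in
theorem core : ∀ (n : ℕ) (X : Type u) [Group X] [Finite X], Nat.card X ≤ n →
    (∀ K : Subgroup X, Nat.card (Abelianization ↥K) ≤ Nat.card (Abelianization X)) →
    (∀ K : Subgroup X, Nat.card (Abelianization ↥K) = Nat.card (Abelianization X) → K = ⊤) →
    ⁅commutator X, (⊤ : Subgroup X)⁆ = ⊥ := by
  intro n
  induction n with
  | zero =>
    intro X _ _ hXcard _ _
    exact absurd (Nat.card_pos.trans_le hXcard) (lt_irrefl 0)
  | succ n IH =>
    intro X _ _ hXcard hab hmin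
    by_contra hne
    -- the commutator subgroup is nontrivial
    have hX'ne : commutator X ≠ ⊥ := by
      intro h
      apply hne
      rw [h]
      exact Subgroup.commutator_bot_left ⊤
    -- supplements of the derived subgroup are everything
    have key : ∀ A : Subgroup X, A ⊔ commutator X = ⊤ → A = ⊤ := by
      intro A hA
      apply hmin
      refine le_antisymm (hab A) ?_
      have hsurj : Function.Surjective (Abelianization.of.comp A.subtype) := by
        intro y
        obtain ⟨x, rfl⟩ := ab_of_surjective y
        have hx : x ∈ (↑A : Set X) * (↑(commutator X) : Set X) := by
          rw [← Subgroup.mul_normal, hA]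
          simp
        obtain ⟨a, ha, c, hc, rfl⟩ := hx
        refine ⟨⟨a, ha⟩, ?_⟩
        have hcker : Abelianization.of c = 1 := by
          have h0 := Abelianization.commutator_subset_ker (Abelianization.of (G := X)) hc
          rwa [MonoidHom.mem_ker] at h0
        simp [map_mul, hcker]
      exact card_le_card_abelianization _ hsurj
    -- quotient step via induction hypothesis
    have stepQ : ∀ N : Subgroup X, N.Normal → N ≠ ⊥ → N ≤ commutator X →
        ⁅commutator X, (⊤ : Subgroup X)⁆ ≤ N := by
      intro N hN hNbot hNle
      haveI := hN
      have hq : Nat.card (X ⧸ N) ≤ n := by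
        have h1 : Nat.card X = Nat.card (X ⧸ N) * Nat.card N :=
          Subgroup.card_eq_card_quotient_mul_card_subgroup N
        have h2 : 1 < Nat.card N := (Subgroup.one_lt_card_iff_ne_bot N).mpr hNbot
        have h3 : 0 < Nat.card (X ⧸ N) := Nat.card_pos
        have h4 : Nat.card (X ⧸ N) < Nat.card X := by
          calc Nat.card (X ⧸ N) < Nat.card (X ⧸ N) * Nat.card N :=
                (Nat.lt_mul_iff_one_lt_right h3).mpr h2
            _ = Nat.card X := h1.symm
        omega
      have habQ : ∀ K : Subgroup (X ⧸ N),
          Nat.card (Abelianization ↥K) ≤ Nat.card (Abelianization (X ⧸ N)) := by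
        intro K
        obtain ⟨f, hf⟩ := exists_surjHom_comap N K
        calc Nat.card (Abelianization ↥K)
            ≤ Nat.card (Abelianization ↥(K.comap (QuotientGroup.mk' N))) :=
              card_abelianization_le_of_surjective f hf
          _ ≤ Nat.card (Abelianization X) := hab _
          _ = Nat.card (Abelianization (X ⧸ N)) := (card_abelianization_quotient N hNle).symm
      have hminQ : ∀ K : Subgroup (X ⧸ N),
          Nat.card (Abelianization ↥K) = Nat.card (Abelianization (X ⧸ N)) → K = ⊤ := by
        intro K hK
        obtain ⟨f, hf⟩ := exists_surjHom_comap N K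
        have h1 : Nat.card (Abelianization ↥(K.comap (QuotientGroup.mk' N)))
            = Nat.card (Abelianization X) := by
          refine le_antisymm (hab _) ?_
          calc Nat.card (Abelianization X)
              = Nat.card (Abelianization (X ⧸ N)) := (card_abelianization_quotient N hNle).symm
            _ = Nat.card (Abelianization ↥K) := hK.symm
            _ ≤ _ := card_abelianization_le_of_surjective f hf
        have h2 := hmin _ h1
        have h3 := congrArg (Subgroup.map (QuotientGroup.mk' N)) h2
        rwa [Subgroup.map_comap_eq_self_of_surjective (QuotientGroup.mk'_surjective N),
          Subgroup.map_top_of_surjective _ (QuotientGroup.mk'_surjective N)] at h3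
      have hres := IH (X ⧸ N) hq habQ hminQ
      have hcomm : Subgroup.map (QuotientGroup.mk' N) (commutator X) = commutator (X ⧸ N) := by
        rw [_root_.commutator_def, _root_.commutator_def, Subgroup.map_commutator,
          Subgroup.map_top_of_surjective _ (QuotientGroup.mk'_surjective N)]
      have hmap : Subgroup.map (QuotientGroup.mk' N) ⁅commutator X, (⊤ : Subgroup X)⁆
          = ⁅commutator (X ⧸ N), (⊤ : Subgroup (X ⧸ N))⁆ := by
        rw [Subgroup.map_commutator, hcomm,
          Subgroup.map_top_of_surjective _ (QuotientGroup.mk'_surjective N)]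
      rw [hres] at hmap
      have h5 := (Subgroup.map_eq_bot_iff _).mp hmap
      rwa [QuotientGroup.ker_mk'] at h5
    -- every Sylow subgroup of the derived subgroup is normal in X
    have sylN : ∀ (q : ℕ) (_ : Fact q.Prime) (S : Sylow q ↥(commutator X)),
        ((S : Subgroup ↥(commutator X)).map (commutator X).subtype).Normal := by
      intro q hq S
      haveI := hq
      have hfr := Sylow.normalizer_sup_eq_top (G := X) (N := commutator X) S
      exact Subgroup.normalizer_eq_top_iff.mp (key _ hfr)
    -- |commutator X| has a unique prime divisor p0
    have hcX' : 1 < Nat.card ↥(commutator X) := (Subgroup.one_lt_card_iff_ne_bot _).mpr hX'ne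
    set p0 := (Nat.card ↥(commutator X)).minFac with hp0def
    have hp0prime : p0.Prime := Nat.minFac_prime (by omega)
    have huniq : ∀ q : ℕ, q.Prime → q ∣ Nat.card ↥(commutator X) → q = p0 := by
      intro q hqp hqd
      by_contra hqne
      have hp0d : p0 ∣ Nat.card ↥(commutator X) := Nat.minFac_dvd _
      haveI hqf : Fact q.Prime := ⟨hqp⟩
      haveI hpf : Fact p0.Prime := ⟨hp0prime⟩
      obtain ⟨Sq⟩ : Nonempty (Sylow q ↥(commutator X)) := inferInstance
      obtain ⟨Sp⟩ : Nonempty (Sylow p0 ↥(commutator X)) := inferInstance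
      have hmono : ∀ (r : ℕ) (hr : Fact r.Prime) (S : Sylow r ↥(commutator X)),
          r ∣ Nat.card ↥(commutator X) →
          ⁅commutator X, (⊤ : Subgroup X)⁆ ≤
            (S : Subgroup ↥(commutator X)).map (commutator X).subtype ∧
          Nat.card ↥((S : Subgroup ↥(commutator X)).map (commutator X).subtype) =
            r ^ (Nat.card ↥(commutator X)).factorization r := by
        intro r hr S hrd
        haveI := hr
        have hcard : Nat.card ↥((S : Subgroup ↥(commutator X)).map (commutator X).subtype)
            = r ^ (Nat.card ↥(commutator X)).factorization r := by
          rw [← Sylow.card_eq_multiplicity S]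
          exact (Nat.card_congr (Subgroup.equivMapOfInjective _ _
            (Subgroup.subtype_injective _)).toEquiv).symm
        have hpos : 0 < (Nat.card ↥(commutator X)).factorization r :=
          Nat.Prime.factorization_pos_of_dvd hr.out (by omega) hrd
        have hne2 : ((S : Subgroup ↥(commutator X)).map (commutator X).subtype) ≠ ⊥ := by
          intro hb
          rw [hb, Subgroup.card_bot] at hcard
          have := Nat.one_lt_pow hpos.ne' hr.out.one_lt
          omega
        refine ⟨stepQ _ (sylN r hr S) hne2 (Subgroup.map_subtype_le _), hcard⟩
      obtain ⟨hq1, hq2⟩ := hmono q hqf Sq hqd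
      obtain ⟨hp1, hp2⟩ := hmono p0 hpf Sp hp0d
      have hd1 : Nat.card ↥(⁅commutator X, (⊤ : Subgroup X)⁆) ∣
          q ^ (Nat.card ↥(commutator X)).factorization q := by
        rw [← hq2]; exact Subgroup.card_dvd_of_le hq1
      have hd2 : Nat.card ↥(⁅commutator X, (⊤ : Subgroup X)⁆) ∣
          p0 ^ (Nat.card ↥(commutator X)).factorization p0 := by
        rw [← hp2]; exact Subgroup.card_dvd_of_le hp1
      have hcop : Nat.Coprime (q ^ (Nat.card ↥(commutator X)).factorization q)
          (p0 ^ (Nat.card ↥(commutator X)).factorization p0) :=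
        Nat.Coprime.pow _ _ ((Nat.coprime_primes hqp hp0prime).mpr hqne)
      have hone : Nat.card ↥(⁅commutator X, (⊤ : Subgroup X)⁆) = 1 :=
        Nat.eq_one_of_dvd_coprimes hcop hd1 hd2
      exact hne (Subgroup.card_eq_one.mp hone)
    -- Sylow subgroups of X at other primes are central
    have Tcen : ∀ (q : ℕ), q.Prime → q ≠ p0 → ∀ T : Sylow q X,
        (T : Subgroup X) ≤ center X := by
      intro q hqp hqne T
      haveI : Fact q.Prime := ⟨hqp⟩
      set M := commutator X ⊔ (T : Subgroup X) with hM
      haveI : M.Normal := normal_of_commutator_le le_sup_left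
      have hTM : (T : Subgroup X) ≤ M := le_sup_right
      have hfr := Sylow.normalizer_sup_eq_top' T hTM
      have h1 : Subgroup.normalizer ((T : Subgroup X) : Set X) ⊔ commutator X = ⊤ := by
        rw [hM, sup_comm (commutator X) (T : Subgroup X), ← sup_assoc,
          sup_of_le_left (a := Subgroup.normalizer (T : Set X)) (b := (T : Subgroup X))
            Subgroup.le_normalizer] at hfr
        exact hfr
      haveI hTnorm : (T : Subgroup X).Normal := Subgroup.normalizer_eq_top_iff.mp (key _ h1)
      have h2 : ⁅(T : Subgroup X), (⊤ : Subgroup X)⁆ ≤ (T : Subgroup X) ⊓ commutator X :=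
        le_inf (Subgroup.commutator_le_left _ _)
          (by rw [_root_.commutator_def]; exact Subgroup.commutator_mono le_top le_rfl)
      have h3 : (T : Subgroup X) ⊓ commutator X = ⊥ := by
        apply Subgroup.card_eq_one.mp
        have hd1 : Nat.card ↥((T : Subgroup X) ⊓ commutator X) ∣ Nat.card ↥(T : Subgroup X) :=
          Subgroup.card_dvd_of_le inf_le_left
        have hd2 : Nat.card ↥((T : Subgroup X) ⊓ commutator X) ∣ Nat.card ↥(commutator X) :=
          Subgroup.card_dvd_of_le inf_le_right
        have hTcard : Nat.card ↥(T : Subgroup X) = q ^ (Nat.card X).factorization q :=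
          Sylow.card_eq_multiplicity T
        have hnd : ¬ q ∣ Nat.card ↥(commutator X) := fun hdvd => hqne (huniq q hqp hdvd)
        have hcop : Nat.Coprime (q ^ (Nat.card X).factorization q)
            (Nat.card ↥(commutator X)) :=
          Nat.Coprime.pow_left _ ((Nat.Prime.coprime_iff_not_dvd hqp).mpr hnd)
        exact Nat.eq_one_of_dvd_coprimes hcop (hTcard ▸ hd1) hd2
      intro t ht
      rw [Subgroup.mem_center_iff]
      intro g
      have h5 : ⁅t, g⁆ ∈ ((T : Subgroup X) ⊓ commutator X) :=
        h2 (Subgroup.commutator_mem_commutator ht (mem_top g))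
      rw [h3, Subgroup.mem_bot] at h5
      exact (commutatorElement_eq_one_iff_mul_comm.mp h5).symm
    -- X is nilpotent
    have hnil : Group.IsNilpotent X := by
      have hquniq : ∀ q : ℕ, q.Prime → q ∣ Nat.card (X ⧸ center X) → q = p0 := by
        intro q hqp hqd
        by_contra hqne
        haveI : Fact q.Prime := ⟨hqp⟩
        obtain ⟨T⟩ : Nonempty (Sylow q X) := inferInstance
        have hTc : (T : Subgroup X) ≤ center X := Tcen q hqp hqne T
        have hTcard : Nat.card ↥(T : Subgroup X) = q ^ (Nat.card X).factorization q :=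
          Sylow.card_eq_multiplicity T
        have hdvd1 : q ^ (Nat.card X).factorization q ∣ Nat.card ↥(center X) := by
          rw [← hTcard]; exact Subgroup.card_dvd_of_le hTc
        have h1 : Nat.card X = Nat.card (X ⧸ center X) * Nat.card ↥(center X) :=
          Subgroup.card_eq_card_quotient_mul_card_subgroup _
        have h2 : q ^ ((Nat.card X).factorization q + 1) ∣ Nat.card X := by
          have h2a := mul_dvd_mul hqd hdvd1
          rw [← h1] at h2a
          calc q ^ ((Nat.card X).factorization q + 1)
              = q * q ^ (Nat.card X).factorization q := by ring
            _ ∣ Nat.card X := h2a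
        exact absurd h2 (Nat.pow_succ_factorization_not_dvd (Nat.card_pos).ne' hqp)
      have hppow : ∃ k, Nat.card (X ⧸ center X) = p0 ^ k := by
        have hn₀ : Nat.card (X ⧸ center X) ≠ 0 := Nat.card_pos.ne'
        refine ⟨(Nat.card (X ⧸ center X)).factorization p0, ?_⟩
        by_contra hne2
        have hoc : ordCompl[p0] (Nat.card (X ⧸ center X)) ≠ 1 := by
          intro h
          apply hne2
          have h6 := Nat.ordProj_mul_ordCompl_eq_self (Nat.card (X ⧸ center X)) p0
          rw [h, mul_one] at h6
          exact h6.symm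
        have hqp : (ordCompl[p0] (Nat.card (X ⧸ center X))).minFac.Prime :=
          Nat.minFac_prime hoc
        have hq1 : (ordCompl[p0] (Nat.card (X ⧸ center X))).minFac ∣
            ordCompl[p0] (Nat.card (X ⧸ center X)) := Nat.minFac_dvd _
        have hq2 : (ordCompl[p0] (Nat.card (X ⧸ center X))).minFac ∣ Nat.card (X ⧸ center X) :=
          hq1.trans (Nat.ordCompl_dvd _ p0)
        have hp0ndvd : ¬ p0 ∣ ordCompl[p0] (Nat.card (X ⧸ center X)) :=
          Nat.not_dvd_ordCompl hp0prime hn₀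
        have hqeq : (ordCompl[p0] (Nat.card (X ⧸ center X))).minFac = p0 := hquniq _ hqp hq2
        rw [hqeq] at hq1
        exact hp0ndvd hq1
      obtain ⟨k, hk⟩ := hppow
      haveI : Fact p0.Prime := ⟨hp0prime⟩
      have hpg : IsPGroup p0 (X ⧸ center X) := IsPGroup.of_card hk
      exact of_quotient_center_nilpotent hpg.isNilpotent
    -- the fourth term of the lower central series vanishes
    have hG4 : ⁅⁅commutator X, (⊤ : Subgroup X)⁆, (⊤ : Subgroup X)⁆ = ⊥ := by
      by_contra hG4ne
      have hle1 : ⁅⁅commutator X, (⊤ : Subgroup X)⁆, (⊤ : Subgroup X)⁆ ≤ commutator X := by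
        calc ⁅⁅commutator X, (⊤ : Subgroup X)⁆, (⊤ : Subgroup X)⁆
            ≤ ⁅(⊤ : Subgroup X), (⊤ : Subgroup X)⁆ := Subgroup.commutator_mono le_top le_rfl
          _ = commutator X := (_root_.commutator_def X).symm
      have hstep := stepQ _ inferInstance hG4ne hle1
      have hle2 : ⁅⁅commutator X, (⊤ : Subgroup X)⁆, (⊤ : Subgroup X)⁆ ≤
          ⁅commutator X, (⊤ : Subgroup X)⁆ := Subgroup.commutator_le_left _ _
      have heq : ⁅⁅commutator X, (⊤ : Subgroup X)⁆, (⊤ : Subgroup X)⁆ =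
          ⁅commutator X, (⊤ : Subgroup X)⁆ := le_antisymm hle2 hstep
      have hl2 : (⊤ : Subgroup X).lowerCentralSeries 2 = ⁅commutator X, (⊤ : Subgroup X)⁆ := by
        rw [lcs_succ_comm, Subgroup.top_lowerCentralSeries_one]
      have hstab : (⊤ : Subgroup X).lowerCentralSeries (2 + 1) = (⊤ : Subgroup X).lowerCentralSeries 2 := by
        rw [lcs_succ_comm, hl2, heq]
      have hbot := lcs_bot_of_nilpotent_of_stab hnil hstab
      rw [hl2] at hbot
      exact hne hbot
    -- γ₃ is central of prime order
    have hVcen : ⁅commutator X, (⊤ : Subgroup X)⁆ ≤ center X := by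
      intro v hv
      rw [Subgroup.mem_center_iff]
      intro g
      have h1 : ⁅v, g⁆ ∈ (⊥ : Subgroup X) := by
        rw [← hG4]; exact Subgroup.commutator_mem_commutator hv (mem_top g)
      rw [Subgroup.mem_bot] at h1
      exact (commutatorElement_eq_one_iff_mul_comm.mp h1).symm
    have hVle : ⁅commutator X, (⊤ : Subgroup X)⁆ ≤ commutator X := by
      calc ⁅commutator X, (⊤ : Subgroup X)⁆ ≤ ⁅(⊤ : Subgroup X), (⊤ : Subgroup X)⁆ :=
            Subgroup.commutator_mono le_top le_rfl
        _ = commutator X := (_root_.commutator_def X).symm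
    obtain ⟨x, hxV, hxne⟩ : ∃ x ∈ ⁅commutator X, (⊤ : Subgroup X)⁆, x ≠ 1 := by
      by_contra h
      push_neg at h
      exact hne ((Subgroup.eq_bot_iff_forall _).mpr h)
    have hzpnormal : (Subgroup.zpowers x).Normal := normal_zpowers_of_central (hVcen hxV)
    have hzpne : Subgroup.zpowers x ≠ ⊥ := by
      rw [Ne, Subgroup.zpowers_eq_bot]; exact hxne
    have hzple : Subgroup.zpowers x ≤ commutator X := Subgroup.zpowers_le.mpr (hVle hxV)
    have hord2 : 1 < orderOf x := by
      have h1 : orderOf x ≠ 1 := fun h => hxne (orderOf_eq_one_iff.mp h)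
      have h2 : 0 < orderOf x := orderOf_pos x
      omega
    set pp := (orderOf x).minFac with hppdef
    have hpprime : pp.Prime := Nat.minFac_prime (by omega)
    have hppdvd : pp ∣ orderOf x := Nat.minFac_dvd _
    set y := x ^ (orderOf x / pp) with hy
    have hyq : y ^ pp = 1 := by
      rw [hy, ← pow_mul, Nat.div_mul_cancel hppdvd, pow_orderOf_eq_one]
    have hyne : y ≠ 1 := by
      intro h
      have hdvd : orderOf x ∣ orderOf x / pp := orderOf_dvd_of_pow_eq_one (by rw [← hy]; exact h)
      have hpos2 : 0 < orderOf x / pp :=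
        Nat.div_pos (Nat.minFac_le (by omega)) hpprime.pos
      have hle3 := Nat.le_of_dvd hpos2 hdvd
      have hlt : orderOf x / pp < orderOf x := Nat.div_lt_self (by omega) hpprime.one_lt
      omega
    have hyV : y ∈ ⁅commutator X, (⊤ : Subgroup X)⁆ := by
      rw [hy]; exact Subgroup.pow_mem _ hxV _
    have hzpy_normal : (Subgroup.zpowers y).Normal := normal_zpowers_of_central (hVcen hyV)
    have hzpyne : Subgroup.zpowers y ≠ ⊥ := by rw [Ne, Subgroup.zpowers_eq_bot]; exact hyne
    have hzpyle : Subgroup.zpowers y ≤ commutator X := Subgroup.zpowers_le.mpr (hVle hyV)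
    have hVy : ⁅commutator X, (⊤ : Subgroup X)⁆ ≤ Subgroup.zpowers y :=
      stepQ _ hzpy_normal hzpyne hzpyle
    have hordy_dvd : orderOf y ∣ pp := orderOf_dvd_of_pow_eq_one hyq
    have hordy : orderOf y = pp :=
      (Nat.Prime.eq_one_or_self_of_dvd hpprime _ hordy_dvd).resolve_left
        (fun h => hyne (orderOf_eq_one_iff.mp h))
    have hVcard_dvd : Nat.card ↥(⁅commutator X, (⊤ : Subgroup X)⁆) ∣ pp := by
      have h7 := Subgroup.card_dvd_of_le hVy
      rwa [Nat.card_zpowers, hordy] at h7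
    have hVcard : Nat.card ↥(⁅commutator X, (⊤ : Subgroup X)⁆) = pp := by
      rcases Nat.Prime.eq_one_or_self_of_dvd hpprime _ hVcard_dvd with h | h
      · exact absurd (Subgroup.card_eq_one.mp h) hne
      · exact h
    -- ===== counting step =====
    classical
    letI : Fintype X := Fintype.ofFinite X
    set D := Subgroup.centralizer ((commutator X : Subgroup X) : Set X) with hDdef
    set ZI := center X ⊓ commutator X with hZIdef
    have hDtop_false : D = ⊤ → False := by
      intro hDt
      apply hne
      rw [eq_bot_iff]
      refine Subgroup.commutator_le.mpr ?_
      intro a ha b _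
      rw [Subgroup.mem_bot, commutatorElement_eq_one_iff_mul_comm]
      have hbD : b ∈ D := by rw [hDt]; trivial
      exact Subgroup.mem_centralizer_iff.mp hbD a ha
    have memV : ∀ (a : X), a ∈ commutator X → ∀ g : X,
        ⁅a, g⁆ ∈ ⁅commutator X, (⊤ : Subgroup X)⁆ :=
      fun a ha g => Subgroup.commutator_mem_commutator ha (mem_top g)
    have hcent : ∀ v, v ∈ ⁅commutator X, (⊤ : Subgroup X)⁆ → ∀ g : X, g * v * g⁻¹ = v := by
      intro v hv g
      have h := Subgroup.mem_center_iff.mp (hVcen hv) g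
      rw [h, mul_assoc, mul_inv_cancel, mul_one]
    have phidef : ∀ (a : X), a ∈ commutator X →
        ∃ f : X →* ↥(⁅commutator X, (⊤ : Subgroup X)⁆), ∀ g, (f g : X) = ⁅a, g⁆ := by
      intro a ha
      refine ⟨MonoidHom.mk' (fun g => ⟨⁅a, g⁆, memV a ha g⟩) ?_, fun g => rfl⟩
      intro g h
      ext
      show ⁅a, g * h⁆ = ⁅a, g⁆ * ⁅a, h⁆
      have hid : ⁅a, g * h⁆ = ⁅a, g⁆ * (g * ⁅a, h⁆ * g⁻¹) := by group
      rw [hid, hcent _ (memV a ha h) g]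
    have psidef : ∀ (g : X), ∃ f : ↥(commutator X) →* ↥(⁅commutator X, (⊤ : Subgroup X)⁆),
        ∀ a : ↥(commutator X), (f a : X) = ⁅(a : X), g⁆ := by
      intro g
      refine ⟨MonoidHom.mk' (fun a => ⟨⁅(a : X), g⁆, memV _ a.2 g⟩) ?_, fun a => rfl⟩
      intro a b
      ext
      show ⁅(a : X) * (b : X), g⁆ = ⁅(a : X), g⁆ * ⁅(b : X), g⁆
      have hid : ⁅(a : X) * (b : X), g⁆ = ((a : X) * ⁅(b : X), g⁆ * (a : X)⁻¹) * ⁅(a : X), g⁆ := by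
        group
      rw [hid, hcent _ (memV _ b.2 g) (a : X)]
      exact Subgroup.mem_center_iff.mp (hVcen (memV _ a.2 g)) ⁅(b : X), g⁆
    -- evaluation of the centralizer counts
    have evalx : ∀ a : ↥(commutator X),
        ((a : X) ∈ center X ∧
          (Finset.univ.filter fun g : X => (a : X) * g = g * (a : X)).card = Nat.card X) ∨
        ((a : X) ∉ center X ∧
          (Finset.univ.filter fun g : X => (a : X) * g = g * (a : X)).card * pp = Nat.card X) := by
      intro a
      obtain ⟨f, hf⟩ := phidef (a : X) a.2
      have hker : ∀ g : X, g ∈ f.ker ↔ (a : X) * g = g * (a : X) := by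
        intro g
        rw [MonoidHom.mem_ker]
        constructor
        · intro h
          have h1 : (f g : X) = 1 := by rw [h]; rfl
          rw [hf g] at h1
          exact commutatorElement_eq_one_iff_mul_comm.mp h1
        · intro h
          refine Subtype.ext ?_
          rw [hf g]
          exact commutatorElement_eq_one_iff_mul_comm.mpr h
      have hcardker : (Finset.univ.filter fun g : X => (a : X) * g = g * (a : X)).card
          = Nat.card ↥f.ker := by
        rw [Nat.card_eq_fintype_card]
        rw [← Fintype.card_subtype]
        exact Fintype.card_congr (Equiv.subtypeEquivRight (fun g => (hker g).symm))
      by_cases hc : (a : X) ∈ center X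
      · left
        refine ⟨hc, ?_⟩
        rw [hcardker]
        have hk : f.ker = ⊤ := by
          rw [Subgroup.eq_top_iff']
          intro g
          rw [hker g]
          exact (Subgroup.mem_center_iff.mp hc g).symm
        rw [hk]
        exact Subgroup.card_top
      · right
        refine ⟨hc, ?_⟩
        have hrange : Nat.card ↥f.range = pp := by
          have hdvd : Nat.card ↥f.range ∣ pp := by
            rw [← hVcard]
            exact Subgroup.card_subgroup_dvd_card _
          rcases Nat.Prime.eq_one_or_self_of_dvd hpprime _ hdvd with h1 | h1
          · exfalso
            apply hc
            rw [Subgroup.mem_center_iff]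
            intro g
            have hg : f g ∈ f.range := ⟨g, rfl⟩
            rw [Subgroup.card_eq_one.mp h1, Subgroup.mem_bot] at hg
            have h2 : (f g : X) = 1 := by rw [hg]; rfl
            rw [hf g] at h2
            exact (commutatorElement_eq_one_iff_mul_comm.mp h2).symm
          · exact h1
        rw [hcardker]
        have h3 := card_ker_mul_card_range f
        rwa [hrange] at h3
    have evalg : ∀ g : X,
        (g ∈ D ∧
          (Finset.univ.filter fun a : ↥(commutator X) => (a : X) * g = g * (a : X)).card
            = Nat.card ↥(commutator X)) ∨
        (g ∉ D ∧
          (Finset.univ.filter fun a : ↥(commutator X) => (a : X) * g = g * (a : X)).card * pp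
            = Nat.card ↥(commutator X)) := by
      intro g
      obtain ⟨f, hf⟩ := psidef g
      have hker : ∀ a : ↥(commutator X), a ∈ f.ker ↔ (a : X) * g = g * (a : X) := by
        intro a
        rw [MonoidHom.mem_ker]
        constructor
        · intro h
          have h1 : (f a : X) = 1 := by rw [h]; rfl
          rw [hf a] at h1
          exact commutatorElement_eq_one_iff_mul_comm.mp h1
        · intro h
          refine Subtype.ext ?_
          rw [hf a]
          exact commutatorElement_eq_one_iff_mul_comm.mpr h
      have hcardker : (Finset.univ.filter fun a : ↥(commutator X) => (a : X) * g = g * (a : X)).card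
          = Nat.card ↥f.ker := by
        rw [Nat.card_eq_fintype_card]
        rw [← Fintype.card_subtype]
        exact Fintype.card_congr (Equiv.subtypeEquivRight (fun a => (hker a).symm))
      by_cases hc : g ∈ D
      · left
        refine ⟨hc, ?_⟩
        rw [hcardker]
        have hk : f.ker = ⊤ := by
          rw [Subgroup.eq_top_iff']
          intro a
          rw [hker a]
          exact Subgroup.mem_centralizer_iff.mp hc (a : X) a.2
        rw [hk]
        exact Subgroup.card_top
      · right
        refine ⟨hc, ?_⟩
        have hrange : Nat.card ↥f.range = pp := by
          have hdvd : Nat.card ↥f.range ∣ pp := by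
            rw [← hVcard]
            exact Subgroup.card_subgroup_dvd_card _
          rcases Nat.Prime.eq_one_or_self_of_dvd hpprime _ hdvd with h1 | h1
          · exfalso
            apply hc
            rw [hDdef, Subgroup.mem_centralizer_iff]
            intro aa haa
            have hg : f ⟨aa, haa⟩ ∈ f.range := ⟨⟨aa, haa⟩, rfl⟩
            rw [Subgroup.card_eq_one.mp h1, Subgroup.mem_bot] at hg
            have h2 : (f ⟨aa, haa⟩ : X) = 1 := by rw [hg]; rfl
            rw [hf ⟨aa, haa⟩] at h2
            exact commutatorElement_eq_one_iff_mul_comm.mp h2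
          · exact h1
        rw [hcardker]
        have h3 := card_ker_mul_card_range f
        rwa [hrange] at h3
    -- double counting
    have swap : (∑ a : ↥(commutator X),
          (Finset.univ.filter fun g : X => (a : X) * g = g * (a : X)).card)
        = ∑ g : X, (Finset.univ.filter fun a : ↥(commutator X) => (a : X) * g = g * (a : X)).card := by
      simp only [Finset.card_filter]
      exact Finset.sum_comm
    -- abbreviations for the four counts
    set cZ := (Finset.univ.filter fun a : ↥(commutator X) => (a : X) ∈ center X).card with hcZdef
    set cN := (Finset.univ.filter fun a : ↥(commutator X) => ¬ (a : X) ∈ center X).card with hcNdef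
    set cD := (Finset.univ.filter fun g : X => g ∈ D).card with hcDdef2
    set cE := (Finset.univ.filter fun g : X => ¬ g ∈ D).card with hcEdef
    -- existence of noncentral witnesses
    have hX'nc : ¬ commutator X ≤ center X := by
      intro hcc
      apply hne
      rw [eq_bot_iff]
      refine Subgroup.commutator_le.mpr ?_
      intro a ha b _
      rw [Subgroup.mem_bot, commutatorElement_eq_one_iff_mul_comm]
      exact (Subgroup.mem_center_iff.mp (hcc ha) b).symm
    obtain ⟨a₀, ha₀X, ha₀nc⟩ : ∃ a, a ∈ commutator X ∧ a ∉ center X := by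
      by_contra h
      push_neg at h
      exact hX'nc h
    by_cases hDt : D = ⊤
    · exact hDtop_false hDt
    obtain ⟨g₀, hg₀⟩ : ∃ g, g ∉ D := by
      by_contra h
      push_neg at h
      exact hDt ((Subgroup.eq_top_iff' D).mpr h)
    set u := (Finset.univ.filter fun g : X => a₀ * g = g * a₀).card with hudef
    have hua : u * pp = Nat.card X := by
      rcases evalx ⟨a₀, ha₀X⟩ with ⟨hc, _⟩ | ⟨_, h⟩
      · exact absurd hc ha₀nc
      · exact h
    set v := (Finset.univ.filter fun a : ↥(commutator X) => (a : X) * g₀ = g₀ * (a : X)).card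
      with hvdef
    have hva : v * pp = Nat.card ↥(commutator X) := by
      rcases evalg g₀ with ⟨hc, _⟩ | ⟨_, h⟩
      · exact absurd hc hg₀
      · exact h
    -- sums split as linear expressions
    have sum1 : (∑ a : ↥(commutator X),
          (Finset.univ.filter fun g : X => (a : X) * g = g * (a : X)).card)
        = cZ * Nat.card X + cN * u := by
      rw [← Finset.sum_filter_add_sum_filter_not Finset.univ
        (fun a : ↥(commutator X) => (a : X) ∈ center X)]
      congr 1
      · rw [Finset.sum_congr rfl (fun a ha => ?_), Finset.sum_const, smul_eq_mul]
        rcases evalx a with ⟨_, h⟩ | ⟨hnc, _⟩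
        · exact h
        · exact absurd (Finset.mem_filter.mp ha).2 hnc
      · rw [Finset.sum_congr rfl (fun a ha => ?_), Finset.sum_const, smul_eq_mul]
        rcases evalx a with ⟨hc, _⟩ | ⟨_, h⟩
        · exact absurd hc (Finset.mem_filter.mp ha).2
        · exact Nat.eq_of_mul_eq_mul_right hpprime.pos (h.trans hua.symm)
    have sum2 : (∑ g : X,
          (Finset.univ.filter fun a : ↥(commutator X) => (a : X) * g = g * (a : X)).card)
        = cD * Nat.card ↥(commutator X) + cE * v := by
      rw [← Finset.sum_filter_add_sum_filter_not Finset.univ (fun g : X => g ∈ D)]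
      congr 1
      · rw [Finset.sum_congr rfl (fun g hg => ?_), Finset.sum_const, smul_eq_mul]
        rcases evalg g with ⟨_, h⟩ | ⟨hnc, _⟩
        · exact h
        · exact absurd (Finset.mem_filter.mp hg).2 hnc
      · rw [Finset.sum_congr rfl (fun g hg => ?_), Finset.sum_const, smul_eq_mul]
        rcases evalg g with ⟨hc, _⟩ | ⟨_, h⟩
        · exact absurd hc (Finset.mem_filter.mp hg).2
        · exact Nat.eq_of_mul_eq_mul_right hpprime.pos (h.trans hva.symm)
    have hE : cZ * Nat.card X + cN * u = cD * Nat.card ↥(commutator X) + cE * v := by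
      rw [← sum1, ← sum2, swap]
    have hA1 : cZ + cN = Nat.card ↥(commutator X) := by
      rw [hcZdef, hcNdef, Finset.card_filter_add_card_filter_not,
        Finset.card_univ, Nat.card_eq_fintype_card]
    have hA2 : cD + cE = Nat.card X := by
      rw [hcDdef2, hcEdef, Finset.card_filter_add_card_filter_not,
        Finset.card_univ, Nat.card_eq_fintype_card]
    -- the master counting identity
    have main : Nat.card X * cZ = Nat.card ↥(commutator X) * cD := by
      have hppZ : (1 : ℤ) < (pp : ℤ) := by exact_mod_cast hpprime.one_lt
      have hEZ : (cZ : ℤ) * ((u : ℤ) * pp) + cN * u = (cD : ℤ) * ((v : ℤ) * pp) + cE * v := by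
        have := hE
        rw [← hua, ← hva] at this
        exact_mod_cast this
      have hA1Z : (cZ : ℤ) + cN = (v : ℤ) * pp := by
        have := hA1
        rw [← hva] at this
        exact_mod_cast this
      have hA2Z : (cD : ℤ) + cE = (u : ℤ) * pp := by
        have := hA2
        rw [← hua] at this
        exact_mod_cast this
      have h9 : (cZ : ℤ) * u * ((pp : ℤ) - 1) = (cD : ℤ) * v * ((pp : ℤ) - 1) := by
        linear_combination hEZ - (u : ℤ) * hA1Z + (v : ℤ) * hA2Z
      have h10 : (cZ : ℤ) * u = (cD : ℤ) * v :=
        mul_right_cancel₀ (by omega) h9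
      have h11 : ((u : ℤ) * pp) * cZ = ((v : ℤ) * pp) * cD := by
        linear_combination (pp : ℤ) * h10
      have h12 : (Nat.card X : ℤ) * cZ = (Nat.card ↥(commutator X) : ℤ) * cD := by
        rw [← hua, ← hva]
        exact_mod_cast h11
      exact_mod_cast h12
    -- identify the counts with subgroup cardinalities
    have hcZeq : cZ = Nat.card ↥ZI := by
      have e : {a : ↥(commutator X) // (a : X) ∈ center X} ≃ ↥ZI :=
        { toFun := fun a => ⟨(a.1 : X), Subgroup.mem_inf.mpr ⟨a.2, a.1.2⟩⟩
          invFun := fun z => ⟨⟨(z : X), (Subgroup.mem_inf.mp z.2).2⟩, (Subgroup.mem_inf.mp z.2).1⟩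
          left_inv := fun a => by ext; rfl
          right_inv := fun z => by ext; rfl }
      rw [hcZdef, ← Fintype.card_subtype, Nat.card_eq_fintype_card]
      exact Fintype.card_congr e
    have hcDeq : cD = Nat.card ↥D := by
      rw [hcDdef2, ← Fintype.card_subtype, Nat.card_eq_fintype_card]
    rw [hcZeq, hcDeq] at main
    -- finally: the abelianization of D is too large unless D = ⊤
    have hZIleD : ZI ≤ D := by
      intro z hz
      rw [hDdef, Subgroup.mem_centralizer_iff]
      intro h hh
      exact Subgroup.mem_center_iff.mp (Subgroup.mem_inf.mp hz).1 h
    haveI hWnormal : ((ZI.subgroupOf D)).Normal := by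
      constructor
      intro m hm g
      rw [Subgroup.mem_subgroupOf] at hm ⊢
      have hcen : ((m : X)) ∈ center X := (Subgroup.mem_inf.mp hm).1
      have : ((g * m * g⁻¹ : ↥D) : X) = (m : X) := by
        push_cast
        rw [Subgroup.mem_center_iff.mp hcen (g : X), mul_assoc, mul_inv_cancel, mul_one]
      rw [this]
      exact hm
    have hDcomm : commutator ↥D ≤ ZI.subgroupOf D := by
      rw [_root_.commutator_def]
      refine Subgroup.commutator_le.mpr ?_
      intro d₁ _ d₂ _
      rw [Subgroup.mem_subgroupOf]
      have hco : ((⁅d₁, d₂⁆ : ↥D) : X) = ⁅(d₁ : X), (d₂ : X)⁆ := rfl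
      rw [hco, Subgroup.mem_inf]
      constructor
      · apply hall_witt_center
        · intro uu huu
          exact (Subgroup.mem_centralizer_iff.mp d₁.2 uu huu).symm
        · intro uu huu
          exact (Subgroup.mem_centralizer_iff.mp d₂.2 uu huu).symm
      · rw [_root_.commutator_def]
        exact Subgroup.commutator_mem_commutator (mem_top _) (mem_top _)
    -- surjection from the abelianization of D onto D / (ZI ∩ D)
    have hsurjmap : Function.Surjective
        (QuotientGroup.map (commutator ↥D) (ZI.subgroupOf D) (MonoidHom.id ↥D)
          (by simpa using hDcomm)) := by
      intro y
      obtain ⟨d, rfl⟩ := QuotientGroup.mk'_surjective (ZI.subgroupOf D) y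
      exact ⟨QuotientGroup.mk d, rfl⟩
    have hAbD_ge : Nat.card (↥D ⧸ ZI.subgroupOf D) ≤ Nat.card (Abelianization ↥D) :=
      Nat.card_le_card_of_surjective _ hsurjmap
    have hq1 : Nat.card ↥D = Nat.card (↥D ⧸ ZI.subgroupOf D) * Nat.card ↥(ZI.subgroupOf D) :=
      Subgroup.card_eq_card_quotient_mul_card_subgroup _
    have hq2 : Nat.card ↥(ZI.subgroupOf D) = Nat.card ↥ZI :=
      Nat.card_congr (Subgroup.subgroupOfEquivOfLe hZIleD).toEquiv
    have hmX : Nat.card (Abelianization X) * Nat.card ↥(commutator X) = Nat.card X := by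
      have h := Subgroup.card_eq_card_quotient_mul_card_subgroup (commutator X)
      have h2 : Nat.card (Abelianization X) = Nat.card (X ⧸ commutator X) := rfl
      rw [h2]
      exact h.symm
    -- conclude t = m
    have hZIpos : 0 < Nat.card ↥ZI := Nat.card_pos
    have hX'pos : 0 < Nat.card ↥(commutator X) := Nat.card_pos
    have htm : Nat.card (↥D ⧸ ZI.subgroupOf D) = Nat.card (Abelianization X) := by
      have h1 : Nat.card (Abelianization X) * Nat.card ↥(commutator X) * Nat.card ↥ZI
          = Nat.card (↥D ⧸ ZI.subgroupOf D) * Nat.card ↥(commutator X) * Nat.card ↥ZI := by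
        rw [hmX]
        calc Nat.card X * Nat.card ↥ZI
            = Nat.card ↥(commutator X) * Nat.card ↥D := main
          _ = Nat.card ↥(commutator X) *
              (Nat.card (↥D ⧸ ZI.subgroupOf D) * Nat.card ↥ZI) := by rw [hq1, hq2]
          _ = Nat.card (↥D ⧸ ZI.subgroupOf D) * Nat.card ↥(commutator X) * Nat.card ↥ZI := by
              ring
      have h2 := Nat.eq_of_mul_eq_mul_right hZIpos h1
      exact (Nat.eq_of_mul_eq_mul_right hX'pos h2).symm
    have hfinal : Nat.card (Abelianization ↥D) = Nat.card (Abelianization X) :=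
      le_antisymm (hab D) (htm ▸ hAbD_ge)
    exact hDtop_false (hmin D hfinal)

end NilpTwo

/-- Let `G` be a finite group and `H ≤ G` a subgroup of minimal cardinality among all
subgroups `K` of `G` whose abelianization `K/K'` has maximal order among all abelian
sections `A/B` (`B ⊴ A ≤ G`, `A/B` abelian) of `G`.  Then `H` is nilpotent of class at
most 2, i.e. its derived subgroup is contained in its center. -/
theorem nilpotent_class_two_of_minimal_maximal_abelianization {G : Type*} [Group G] [Fintype G]
    (H : Subgroup G)
    (hmax : ∀ (A : Subgroup G) (B : Subgroup A), B.Normal → commutator ↥A ≤ B →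
      Nat.card (↥A ⧸ B) ≤ Nat.card (Abelianization ↥H))
    (hmin : ∀ K : Subgroup G,
      (∀ (A : Subgroup G) (B : Subgroup A), B.Normal → commutator ↥A ≤ B →
        Nat.card (↥A ⧸ B) ≤ Nat.card (Abelianization ↥K)) →
      Nat.card H ≤ Nat.card K) :
    commutator ↥H ≤ Subgroup.center ↥H := by
  classical
  have hab : ∀ K : Subgroup ↥H,
      Nat.card (Abelianization ↥K) ≤ Nat.card (Abelianization ↥H) := by
    intro K
    have e : ↥K ≃* ↥(K.map H.subtype) :=
      Subgroup.equivMapOfInjective K H.subtype (Subgroup.subtype_injective H)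
    have h1 : Nat.card (Abelianization ↥K) = Nat.card (Abelianization ↥(K.map H.subtype)) :=
      NilpTwo.card_abelianization_congr e
    have h2 := hmax (K.map H.subtype) (commutator ↥(K.map H.subtype)) inferInstance le_rfl
    have h3 : Nat.card (Abelianization ↥(K.map H.subtype))
        = Nat.card (↥(K.map H.subtype) ⧸ commutator ↥(K.map H.subtype)) := rfl
    rw [h1, h3]
    exact h2
  have hmin' : ∀ K : Subgroup ↥H,
      Nat.card (Abelianization ↥K) = Nat.card (Abelianization ↥H) → K = ⊤ := by
    intro K hK
    have e : ↥K ≃* ↥(K.map H.subtype) :=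
      Subgroup.equivMapOfInjective K H.subtype (Subgroup.subtype_injective H)
    have hcond : ∀ (A : Subgroup G) (B : Subgroup A), B.Normal → commutator ↥A ≤ B →
        Nat.card (↥A ⧸ B) ≤ Nat.card (Abelianization ↥(K.map H.subtype)) := by
      intro A B hB hcomm
      calc Nat.card (↥A ⧸ B) ≤ Nat.card (Abelianization ↥H) := hmax A B hB hcomm
        _ = Nat.card (Abelianization ↥K) := hK.symm
        _ = Nat.card (Abelianization ↥(K.map H.subtype)) := NilpTwo.card_abelianization_congr e
    have h4 := hmin (K.map H.subtype) hcond
    have h5 : Nat.card ↥(K.map H.subtype) = Nat.card ↥K := (Nat.card_congr e.toEquiv).symm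
    have h6 : Nat.card ↥K ≤ Nat.card ↥H :=
      Nat.card_le_card_of_injective (Subtype.val : ↥K → ↥H) Subtype.coe_injective
    have h7 : Nat.card ↥K = Nat.card ↥H := le_antisymm h6 (h5 ▸ h4)
    exact Subgroup.eq_top_of_card_eq K h7
  have hcore := NilpTwo.core (Nat.card ↥H) ↥H le_rfl hab hmin'
  intro c hc
  rw [Subgroup.mem_center_iff]
  intro g
  have h8 : ⁅c, g⁆ ∈ (⊥ : Subgroup ↥H) := by
    rw [← hcore]
    exact Subgroup.commutator_mem_commutator hc (Subgroup.mem_top g)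
  rw [Subgroup.mem_bot] at h8
  exact (commutatorElement_eq_one_iff_mul_comm.mp h8).symm
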